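/- For every α ∈ ℝ, the potential H(V,W) = V²/(2W) + αW⁷, defined on the region W ≠ 0, satisfies the five integrability conditions H_VVVV·H_VV = 2H_VVV², H_VVVW·H_VV = 2H_VVW·H_VVV, H_VVWW·H_VV = 2H_VVW², H_VWWW·H_VV = 3H_VWW·H_VVW − H_WWW·H_VVV, and H_WWWW·H_VV = 6H_VWW² − 4H_WWW·H_VVW. -/

import Mathlib

noncomputable def pV (f : ℝ → ℝ → ℝ) : ℝ → ℝ → ℝ := fun v w => deriv (fun x => f x w) v
noncomputable def pW (f : ℝ → ℝ → ℝ) : ℝ → ℝ → ℝ := fun v w => deriv (fun y => f v y) w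

/-- The five integrability conditions for a potential `H(V,W)` at the point `(v, w)`.
Subscripts: `H_VVW = ∂³H/∂V²∂W`, etc. -/
def IntCond (H : ℝ → ℝ → ℝ) (v w : ℝ) : Prop :=
  pV (pV (pV (pV H))) v w * pV (pV H) v w = 2 * (pV (pV (pV H)) v w) ^ 2 ∧
  pW (pV (pV (pV H))) v w * pV (pV H) v w =
    2 * pW (pV (pV H)) v w * pV (pV (pV H)) v w ∧
  pW (pW (pV (pV H))) v w * pV (pV H) v w = 2 * (pW (pV (pV H)) v w) ^ 2 ∧
  pW (pW (pW (pV H))) v w * pV (pV H) v w =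
    3 * pW (pW (pV H)) v w * pW (pV (pV H)) v w -
      pW (pW (pW H)) v w * pV (pV (pV H)) v w ∧
  pW (pW (pW (pW H))) v w * pV (pV H) v w =
    6 * (pW (pW (pV H)) v w) ^ 2 - 4 * pW (pW (pW H)) v w * pW (pV (pV H)) v w

namespace Stmt2Aux

lemma ederiv {f g : ℝ → ℝ} {w : ℝ} (hw : w ≠ 0) (h : ∀ y : ℝ, y ≠ 0 → f y = g y) :
    deriv f w = deriv g w :=
  Filter.EventuallyEq.deriv_eq ((eventually_ne_nhds hw).mono fun y hy => h y hy)

lemma deriv1 (c : ℝ) (n : ℤ) {x : ℝ} (_hx : x ≠ 0) :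
    deriv (fun y : ℝ => c * y ^ n) x = c * n * x ^ (n - 1) := by
  rw [deriv_const_mul_field, deriv_zpow]; ring

lemma deriv2 (c₁ c₂ : ℝ) (n₁ n₂ : ℤ) {x : ℝ} (hx : x ≠ 0) :
    deriv (fun y : ℝ => c₁ * y ^ n₁ + c₂ * y ^ n₂) x
      = c₁ * n₁ * x ^ (n₁ - 1) + c₂ * n₂ * x ^ (n₂ - 1) := by
  rw [deriv_fun_add (((differentiableAt_zpow.mpr (Or.inl hx)).const_mul c₁))
      (((differentiableAt_zpow.mpr (Or.inl hx)).const_mul c₂)),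
    deriv_const_mul_field, deriv_const_mul_field, deriv_zpow, deriv_zpow]; ring

variable (α : ℝ)

noncomputable def H (α : ℝ) : ℝ → ℝ → ℝ := fun V W => V ^ 2 / (2 * W) + α * W ^ 7

lemma hV (v w : ℝ) : pV (H α) v w = v * w⁻¹ := by
  show deriv (fun x : ℝ => x ^ 2 / (2 * w) + α * w ^ 7) v = v * w⁻¹
  rw [(((hasDerivAt_pow 2 v).div_const (2 * w)).add_const (α * w ^ 7)).deriv]
  rcases eq_or_ne w 0 with h | h
  · simp [h]
  · field_simp; ring

lemma hVV (v w : ℝ) : pV (pV (H α)) v w = w⁻¹ := by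
  show deriv (fun x : ℝ => pV (H α) x w) v = w⁻¹
  have : (fun x : ℝ => pV (H α) x w) = fun x => x * w⁻¹ := funext fun x => hV α x w
  rw [this]; simp

lemma hVVV (v w : ℝ) : pV (pV (pV (H α))) v w = 0 := by
  show deriv (fun x : ℝ => pV (pV (H α)) x w) v = 0
  have : (fun x : ℝ => pV (pV (H α)) x w) = fun _ => w⁻¹ := funext fun x => hVV α x w
  rw [this, deriv_const]

lemma hVVVV (v w : ℝ) : pV (pV (pV (pV (H α)))) v w = 0 := by
  show deriv (fun x : ℝ => pV (pV (pV (H α))) x w) v = 0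
  have : (fun x : ℝ => pV (pV (pV (H α))) x w) = fun _ => 0 := funext fun x => hVVV α x w
  rw [this, deriv_const]

lemma hVVVW (v w : ℝ) (hw : w ≠ 0) : pW (pV (pV (pV (H α)))) v w = 0 := by
  show deriv (fun y : ℝ => pV (pV (pV (H α))) v y) w = 0
  rw [ederiv hw (g := fun _ => 0) (fun y hy => hVVV α v y), deriv_const]

lemma hVVW (v w : ℝ) (hw : w ≠ 0) : pW (pV (pV (H α))) v w = (-1) * w ^ (-2 : ℤ) := by
  show deriv (fun y : ℝ => pV (pV (H α)) v y) w = _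
  rw [ederiv hw (g := fun y => (1 : ℝ) * y ^ (-1 : ℤ))
      (fun y hy => by rw [hVV]; show y⁻¹ = 1 * y ^ (-1 : ℤ); rw [one_mul, zpow_neg_one]), deriv1 _ _ hw]
  norm_num

lemma hVVWW (v w : ℝ) (hw : w ≠ 0) : pW (pW (pV (pV (H α)))) v w = 2 * w ^ (-3 : ℤ) := by
  show deriv (fun y : ℝ => pW (pV (pV (H α))) v y) w = _
  rw [ederiv hw (g := fun y => (-1 : ℝ) * y ^ (-2 : ℤ)) (fun y hy => hVVW α v y hy),
    deriv1 _ _ hw]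
  norm_num

lemma hVW (v w : ℝ) (hw : w ≠ 0) : pW (pV (H α)) v w = -v * w ^ (-2 : ℤ) := by
  show deriv (fun y : ℝ => pV (H α) v y) w = _
  rw [ederiv hw (g := fun y => v * y ^ (-1 : ℤ))
      (fun y hy => by rw [hV]; show v * y⁻¹ = v * y ^ (-1 : ℤ); rw [zpow_neg_one]), deriv1 _ _ hw]
  norm_num1; ring

lemma hVWW (v w : ℝ) (hw : w ≠ 0) : pW (pW (pV (H α))) v w = 2 * v * w ^ (-3 : ℤ) := by
  show deriv (fun y : ℝ => pW (pV (H α)) v y) w = _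
  rw [ederiv hw (g := fun y => -v * y ^ (-2 : ℤ)) (fun y hy => hVW α v y hy), deriv1 _ _ hw]
  norm_num1; ring

lemma hVWWW (v w : ℝ) (hw : w ≠ 0) :
    pW (pW (pW (pV (H α)))) v w = -6 * v * w ^ (-4 : ℤ) := by
  show deriv (fun y : ℝ => pW (pW (pV (H α))) v y) w = _
  rw [ederiv hw (g := fun y => 2 * v * y ^ (-3 : ℤ)) (fun y hy => hVWW α v y hy),
    deriv1 _ _ hw]
  norm_num1; ring

lemma hW (v w : ℝ) (hw : w ≠ 0) :
    pW (H α) v w = (-(v ^ 2 / 2)) * w ^ (-2 : ℤ) + (7 * α) * w ^ (6 : ℤ) := by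
  show deriv (fun y : ℝ => v ^ 2 / (2 * y) + α * y ^ 7) w = _
  rw [ederiv hw (g := fun y => (v ^ 2 / 2) * y ^ (-1 : ℤ) + α * y ^ (7 : ℤ))
      (fun y hy => by
        show v ^ 2 / (2 * y) + α * y ^ 7 = v ^ 2 / 2 * y ^ (-1 : ℤ) + α * y ^ (7 : ℤ)
        rw [zpow_neg_one, show (7 : ℤ) = ((7 : ℕ) : ℤ) by norm_num, zpow_natCast]
        field_simp),
    deriv2 _ _ _ _ hw]
  norm_num1; ring

lemma hWW (v w : ℝ) (hw : w ≠ 0) :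
    pW (pW (H α)) v w = (v ^ 2) * w ^ (-3 : ℤ) + (42 * α) * w ^ (5 : ℤ) := by
  show deriv (fun y : ℝ => pW (H α) v y) w = _
  rw [ederiv hw (g := fun y => (-(v ^ 2 / 2)) * y ^ (-2 : ℤ) + (7 * α) * y ^ (6 : ℤ))
      (fun y hy => hW α v y hy), deriv2 _ _ _ _ hw]
  norm_num1; ring

lemma hWWW (v w : ℝ) (hw : w ≠ 0) :
    pW (pW (pW (H α))) v w = (-3 * v ^ 2) * w ^ (-4 : ℤ) + (210 * α) * w ^ (4 : ℤ) := by
  show deriv (fun y : ℝ => pW (pW (H α)) v y) w = _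
  rw [ederiv hw (g := fun y => (v ^ 2) * y ^ (-3 : ℤ) + (42 * α) * y ^ (5 : ℤ))
      (fun y hy => hWW α v y hy), deriv2 _ _ _ _ hw]
  norm_num1; ring

lemma hWWWW (v w : ℝ) (hw : w ≠ 0) :
    pW (pW (pW (pW (H α)))) v w = (12 * v ^ 2) * w ^ (-5 : ℤ) + (840 * α) * w ^ (3 : ℤ) := by
  show deriv (fun y : ℝ => pW (pW (pW (H α))) v y) w = _
  rw [ederiv hw (g := fun y => (-3 * v ^ 2) * y ^ (-4 : ℤ) + (210 * α) * y ^ (4 : ℤ))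
      (fun y hy => hWWW α v y hy), deriv2 _ _ _ _ hw]
  norm_num1; ring

end Stmt2Aux

theorem stmt_2 (α : ℝ) :
    ∀ v w : ℝ, w ≠ 0 → IntCond (fun V W => V ^ 2 / (2 * W) + α * W ^ 7) v w := by
  intro v w hw
  open Stmt2Aux in
  refine ⟨?_, ?_, ?_, ?_, ?_⟩ <;>
    rw [show (fun V W : ℝ => V ^ 2 / (2 * W) + α * W ^ 7) = Stmt2Aux.H α from rfl]
  · rw [Stmt2Aux.hVVVV α v w, Stmt2Aux.hVVV α v w]; ring
  · rw [Stmt2Aux.hVVVW α v w hw, Stmt2Aux.hVVV α v w]; ring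
  · rw [Stmt2Aux.hVVWW α v w hw, Stmt2Aux.hVVW α v w hw, Stmt2Aux.hVV α v w]
    field_simp
  · rw [Stmt2Aux.hVWWW α v w hw, Stmt2Aux.hVWW α v w hw, Stmt2Aux.hVVW α v w hw,
      Stmt2Aux.hWWW α v w hw, Stmt2Aux.hVVV α v w, Stmt2Aux.hVV α v w]
    field_simp
    ring
  · rw [Stmt2Aux.hWWWW α v w hw, Stmt2Aux.hVWW α v w hw, Stmt2Aux.hWWW α v w hw,
      Stmt2Aux.hVVW α v w hw, Stmt2Aux.hVV α v w]
    field_simp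
    ring
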